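/- Suppose that on a probability space: Z = (Z₁', Z₂')' is a random vector in ℝ^{d_z}; V = (V₁,…,V_{d_b}) is a random vector each of whose real components V_k has an atomless (continuous) distribution; for each k = 1,…,d_b, h_k : ℝ^{d_z} × ℝ → ℝ is measurable and strictly increasing in its second argument and X_k = h_k(Z, V_k); for each k = d_b+1,…,d_x, X_k = g_k(X₁,…,X_{d_b}, Z₁) for a measurable function g_k; B is a random vector in ℝ^{d_w}; and (B, V) is independent of Z. Let R_k = F_{X_k|Z}(X_k | Z) for k = 1,…,d_b, R = (R₁,…,R_{d_b}), and W = (1, X₁,…,X_{d_x}, Z₁')'. Then W and B are conditionally independent given σ(R). -/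

import Mathlib

open MeasureTheory ProbabilityTheory

/-- `F` is a regular conditional distribution function of the real random variable `X` given
the random element `Z`: for each conditioning value `z`, `F z` is monotone and
right-continuous, `F · x` is measurable, and `fun ω => F (Z ω) x` is a version of the
conditional probability `P(X ≤ x | σ(Z))` for every `x`. -/
def IsRegCondCDF {Ω ζ : Type*} [MeasurableSpace Ω] [MeasurableSpace ζ]
    (μ : MeasureTheory.Measure Ω) (X : Ω → ℝ) (Z : Ω → ζ) (F : ζ → ℝ → ℝ) : Prop :=
  (∀ z, Monotone (F z)) ∧
  (∀ z x, ContinuousWithinAt (F z) (Set.Ici x) x) ∧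
  (∀ x, Measurable fun z => F z x) ∧
  (∀ x : ℝ, (fun ω => F (Z ω) x)
    =ᵐ[μ] μ[Set.indicator {ω | X ω ≤ x} (fun _ => (1 : ℝ))
      | MeasurableSpace.comap Z inferInstance])

open MeasureTheory ProbabilityTheory Set Filter Topology
open scoped ENNReal

namespace RankProofAux


variable {Ω : Type*} [MeasurableSpace Ω]

lemma integrable_of_bound (μ : Measure Ω) [IsFiniteMeasure μ] {f : Ω → ℝ}
    (hf : AEStronglyMeasurable f μ) (C : ℝ) (h : ∀ ω, |f ω| ≤ C) : Integrable f μ :=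
  Integrable.mono' (integrable_const C) hf (ae_of_all _ (by simpa [Real.norm_eq_abs] using h))

lemma toReal_prob_le_one {ν : Measure Ω} [IsProbabilityMeasure ν] (s : Set Ω) :
    (ν s).toReal ≤ 1 := by
  have h := prob_le_one (μ := ν) (s := s)
  calc (ν s).toReal ≤ (1 : ℝ≥0∞).toReal := ENNReal.toReal_mono ENNReal.one_ne_top h
    _ = 1 := by simp

lemma eq_of_monotone_of_rat_eq {f g : ℝ → ℝ} (hf : Monotone f) (hg : Monotone g)
    (hfr : ∀ x : ℝ, ∀ ε > (0:ℝ), ∃ y, x < y ∧ f y < f x + ε)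
    (hgr : ∀ x : ℝ, ∀ ε > (0:ℝ), ∃ y, x < y ∧ g y < g x + ε)
    (hq : ∀ q : ℚ, f q = g q) : ∀ x, f x = g x := by
  have key : ∀ (f g : ℝ → ℝ), Monotone f → Monotone g →
      (∀ x : ℝ, ∀ ε > (0:ℝ), ∃ y, x < y ∧ g y < g x + ε) → (∀ q : ℚ, f q = g q) →
      ∀ x, f x ≤ g x := by
    intro f g hf hg hgr hq x
    refine le_of_forall_pos_le_add fun ε hε => ?_
    obtain ⟨y, hxy, hy⟩ := hgr x ε hε
    obtain ⟨q, hq1, hq2⟩ := exists_rat_btwn hxy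
    calc f x ≤ f q := hf hq1.le
      _ = g q := hq q
      _ ≤ g y := hg hq2.le
      _ ≤ g x + ε := hy.le
  exact fun x => le_antisymm (key f g hf hg hgr hq x)
    (key g f hg hf hfr (fun q => (hq q).symm) x)

lemma measure_bad_null (ν : Measure ℝ) [IsFiniteMeasure ν] (hatom : ∀ x : ℝ, ν {x} = 0)
    (q : ℝ) : ν {v | q < v ∧ ν (Iic v) ≤ ν (Iic q)} = 0 := by
  set S := {v | q < v ∧ ν (Iic v) ≤ ν (Iic q)} with hSdef
  have hioc : ∀ v ∈ S, ν (Ioc q v) = 0 := by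
    intro v hv
    have h1 : Iic q ⊆ Iic v := Iic_subset_Iic.mpr hv.1.le
    have h2 : ν (Iic v \ Iic q) = ν (Iic v) - ν (Iic q) :=
      measure_diff h1 measurableSet_Iic.nullMeasurableSet (measure_ne_top ν _)
    have h3 : Iic v \ Iic q = Ioc q v := by
      ext u; simp only [mem_diff, mem_Iic, mem_Ioc, not_le]; tauto
    rw [← h3, h2]
    exact tsub_eq_zero_of_le hv.2
  rcases Set.eq_empty_or_nonempty S with h | hne
  · simp [h]
  by_cases hbdd : BddAbove S
  · set e := sSup S with he
    have hmem_le : ∀ v ∈ S, v ≤ e := fun v hv => le_csSup hbdd hv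
    -- choose w n ∈ S with e - 1/(n+1) < w n
    have hch : ∀ n : ℕ, ∃ w ∈ S, e - 1/(n+1) < w := by
      intro n
      have : e - 1/(n+1) < e := by
        have : (0:ℝ) < 1/(n+1) := by positivity
        linarith
      exact exists_lt_of_lt_csSup hne this
    choose w hwS hwlt using hch
    have hSsub : S ⊆ Ioo q e ∪ {e} := by
      intro v hv
      rcases lt_or_eq_of_le (hmem_le v hv) with h | h
      · exact Or.inl ⟨hv.1, h⟩
      · exact Or.inr (by simp [h])
    have hIoo : ν (Ioo q e) = 0 := by
      refine le_zero_iff.mp ?_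
      have hsub : Ioo q e ⊆ ⋃ n, Ioc q (w n) := by
        intro y hy
        obtain ⟨n, hn⟩ := exists_nat_one_div_lt (sub_pos.mpr hy.2)
        refine mem_iUnion.mpr ⟨n, hy.1, ?_⟩
        have : e - 1/(n+1) > y := by
          have : 1/((n:ℝ)+1) < e - y := hn
          linarith
        exact (lt_of_lt_of_le this (hwlt n).le).le
      calc ν (Ioo q e) ≤ ν (⋃ n, Ioc q (w n)) := measure_mono hsub
        _ ≤ ∑' n, ν (Ioc q (w n)) := measure_iUnion_le _
        _ = 0 := by simp [fun n => hioc (w n) (hwS n)]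
    refine le_zero_iff.mp ?_
    calc ν S ≤ ν (Ioo q e ∪ {e}) := measure_mono hSsub
      _ ≤ ν (Ioo q e) + ν {e} := measure_union_le _ _
      _ = 0 := by rw [hIoo, hatom e, add_zero]
  · -- S unbounded above
    rw [not_bddAbove_iff] at hbdd
    have hch : ∀ n : ℕ, ∃ w ∈ S, (n:ℝ) < w := fun n => hbdd n
    choose w hwS hwlt using hch
    have hsub : S ⊆ ⋃ n, Ioc q (w n) := by
      intro v hv
      obtain ⟨n, hn⟩ := exists_nat_ge v
      exact mem_iUnion.mpr ⟨n, hv.1, hn.trans (hwlt n).le⟩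
    refine le_zero_iff.mp ?_
    calc ν S ≤ ν (⋃ n, Ioc q (w n)) := measure_mono hsub
      _ ≤ ∑' n, ν (Ioc q (w n)) := measure_iUnion_le _
      _ = 0 := by simp [fun n => hioc (w n) (hwS n)]

noncomputable def qT (ν : Measure ℝ) (r : ℝ) : ℝ :=
  (sInf ((fun u : ℝ => (u : EReal)) '' {u | r ≤ (ν (Iic u)).toReal})).toReal

lemma qT_measurable (ν : Measure ℝ) : Measurable (qT ν) := by
  have hmono : Monotone fun r : ℝ =>
      sInf ((fun u : ℝ => (u : EReal)) '' {u | r ≤ (ν (Iic u)).toReal}) := by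
    intro r r' hrr'
    exact sInf_le_sInf (image_mono fun u hu => le_trans hrr' hu)
  exact measurable_ereal_toReal.comp hmono.measurable

lemma qT_ae (ν : Measure ℝ) [IsProbabilityMeasure ν] (hatom : ∀ x : ℝ, ν {x} = 0) :
    ∀ᵐ v ∂ν, qT ν ((ν (Iic v)).toReal) = v := by
  have h1 : ∀ᵐ v ∂ν, ∀ q : ℚ, ¬((q:ℝ) < v ∧ ν (Iic v) ≤ ν (Iic (q:ℝ))) := by
    rw [ae_all_iff]
    intro q
    have h0 := measure_bad_null ν hatom (q:ℝ)
    rw [ae_iff]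
    simpa using h0
  filter_upwards [h1] with v hv
  have hvmem : (v : EReal) ∈ (fun u : ℝ => (u : EReal)) ''
      {u | (ν (Iic v)).toReal ≤ (ν (Iic u)).toReal} :=
    ⟨v, by simp, rfl⟩
  have hle : sInf ((fun u : ℝ => (u : EReal)) ''
      {u | (ν (Iic v)).toReal ≤ (ν (Iic u)).toReal}) ≤ (v : EReal) := sInf_le hvmem
  have hge : (v : EReal) ≤ sInf ((fun u : ℝ => (u : EReal)) ''
      {u | (ν (Iic v)).toReal ≤ (ν (Iic u)).toReal}) := by
    refine le_sInf ?_
    rintro b ⟨u, hu, rfl⟩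
    rw [EReal.coe_le_coe_iff]
    by_contra hlt
    push_neg at hlt
    obtain ⟨q, hq1, hq2⟩ := exists_rat_btwn hlt
    refine hv q ⟨hq2, ?_⟩
    have h2 : ν (Iic v) ≤ ν (Iic u) :=
      (ENNReal.toReal_le_toReal (measure_ne_top _ _) (measure_ne_top _ _)).mp hu
    exact h2.trans (measure_mono (Iic_subset_Iic.mpr hq1.le))
  have : sInf ((fun u : ℝ => (u : EReal)) ''
      {u | (ν (Iic v)).toReal ≤ (ν (Iic u)).toReal}) = (v : EReal) := le_antisymm hle hge
  rw [qT, this]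
  simp

lemma rank_eq_cdf {Ω ζ : Type*} [MeasurableSpace Ω] [MeasurableSpace ζ]
    (μ : Measure Ω) [IsProbabilityMeasure μ]
    {Zp : Ω → ζ} (hZp : Measurable Zp) {Vk : Ω → ℝ} (hVk : Measurable Vk)
    (hind : IndepFun Zp Vk μ)
    {hk : ζ → ℝ → ℝ} (hkm : Measurable fun p : ζ × ℝ => hk p.1 p.2)
    (hkmono : ∀ z, StrictMono (hk z))
    {F : ζ → ℝ → ℝ} (hF : IsRegCondCDF μ (fun ω => hk (Zp ω) (Vk ω)) Zp F) :
    ∀ᵐ ω ∂μ, F (Zp ω) (hk (Zp ω) (Vk ω)) = ((μ.map Vk) (Iic (Vk ω))).toReal := by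
  set ν : Measure ℝ := μ.map Vk with hν
  haveI : IsProbabilityMeasure ν := Measure.isProbabilityMeasure_map hVk.aemeasurable
  obtain ⟨hFmono, hFrc, hFmeas, hFcond⟩ := hF
  have hkzmeas : ∀ z, Measurable (hk z) := fun z => (hkmono z).monotone.measurable
  have hsm : ∀ x : ℝ, MeasurableSet {p : ζ × ℝ | hk p.1 p.2 ≤ x} := fun x =>
    hkm measurableSet_Iic
  have hΦm : ∀ x : ℝ, Measurable fun z => (ν {v | hk z v ≤ x}).toReal := by
    intro x
    exact (measurable_measure_prodMk_left (hsm x)).ennreal_toReal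
  have hXmeas : Measurable fun ω => hk (Zp ω) (Vk ω) := hkm.comp (hZp.prodMk hVk)
  have hmap : μ.map (fun ω => (Zp ω, Vk ω)) = (μ.map Zp).prod ν :=
    (indepFun_iff_map_prod_eq_prod_map_map hZp.aemeasurable hVk.aemeasurable).mp hind
  haveI : SigmaFinite (μ.trim hZp.comap_le) := by
    refine @IsFiniteMeasure.toSigmaFinite _ _ _ ?_
    exact isFiniteMeasure_trim hZp.comap_le
  have step1 : ∀ x : ℝ, (fun ω => (ν {v | hk (Zp ω) v ≤ x}).toReal) =ᵐ[μ]
      μ[Set.indicator {ω | hk (Zp ω) (Vk ω) ≤ x} (fun _ => (1:ℝ))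
        | MeasurableSpace.comap Zp inferInstance] := by
    intro x
    have hXset : MeasurableSet {ω | hk (Zp ω) (Vk ω) ≤ x} := hXmeas measurableSet_Iic
    refine ae_eq_condExp_of_forall_setIntegral_eq hZp.comap_le
      ((integrable_const (1:ℝ)).indicator hXset) (fun A _ _ => ?_) (fun A hA _ => ?_) ?_
    · refine (integrable_of_bound μ ((hΦm x).comp hZp).aestronglyMeasurable 1 fun ω => ?_).integrableOn
      simp only [Function.comp_apply]
      rw [abs_of_nonneg ENNReal.toReal_nonneg]
      exact toReal_prob_le_one _
    · obtain ⟨C, hC, rfl⟩ := hA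
      -- RHS
      have hRHS : ∫ ω in Zp ⁻¹' C, Set.indicator {ω | hk (Zp ω) (Vk ω) ≤ x} (fun _ => (1:ℝ)) ω ∂μ
          = (μ ({ω | hk (Zp ω) (Vk ω) ≤ x} ∩ Zp ⁻¹' C)).toReal := by
        rw [integral_indicator_const _ hXset, measureReal_def, Measure.restrict_apply hXset, smul_eq_mul, mul_one]
      rw [hRHS]
      -- set identity
      set S : Set (ζ × ℝ) := (C ×ˢ univ) ∩ {p : ζ × ℝ | hk p.1 p.2 ≤ x} with hS
      have hSmeas : MeasurableSet S := (hC.prod MeasurableSet.univ).inter (hsm x)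
      have hset : {ω | hk (Zp ω) (Vk ω) ≤ x} ∩ Zp ⁻¹' C
          = (fun ω => (Zp ω, Vk ω)) ⁻¹' S := by
        ext ω
        simp only [hS, mem_inter_iff, mem_setOf_eq, mem_preimage, mem_prod, mem_univ, and_true]
        tauto
      have hmeasure : μ ({ω | hk (Zp ω) (Vk ω) ≤ x} ∩ Zp ⁻¹' C)
          = ∫⁻ z in C, ν {v | hk z v ≤ x} ∂(μ.map Zp) := by
        rw [hset, ← Measure.map_apply (hZp.prodMk hVk) hSmeas, hmap,
          Measure.prod_apply hSmeas]
        have hslice : (fun z => ν (Prod.mk z ⁻¹' S))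
            = C.indicator (fun z => ν {v | hk z v ≤ x}) := by
          funext z
          by_cases hz : z ∈ C
          · rw [indicator_of_mem hz]
            congr 1
            ext v
            simp [hS, hz]
          · rw [indicator_of_notMem hz]
            have : Prod.mk z ⁻¹' S = ∅ := by
              ext v; simp [hS, hz]
            simp [this]
        rw [hslice, lintegral_indicator hC]
      rw [hmeasure]
      -- LHS
      have hνmeas : Measurable fun z : ζ => ν {v | hk z v ≤ x} :=
        measurable_measure_prodMk_left (hsm x)
      have hL1 : ∫ ω in Zp ⁻¹' C, (ν {v | hk (Zp ω) v ≤ x}).toReal ∂μ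
          = ∫ z in C, (ν {v | hk z v ≤ x}).toReal ∂(μ.map Zp) :=
        (setIntegral_map hC ((hΦm x).aestronglyMeasurable) hZp.aemeasurable).symm
      have hL2 : ∫ z in C, (ν {v | hk z v ≤ x}).toReal ∂(μ.map Zp)
          = (∫⁻ z in C, ν {v | hk z v ≤ x} ∂(μ.map Zp)).toReal :=
        integral_toReal (hνmeas.aemeasurable.restrict)
          (ae_of_all _ fun z => measure_lt_top _ _)
      rw [hL1, hL2]
    · exact ((hΦm x).comp (comap_measurable Zp)).stronglyMeasurable.aestronglyMeasurable
  have hrat : ∀ᵐ ω ∂μ, ∀ q : ℚ, F (Zp ω) q = (ν {v | hk (Zp ω) v ≤ (q:ℝ)}).toReal := by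
    rw [ae_all_iff]
    intro q
    exact (hFcond (q:ℝ)).trans ((step1 (q:ℝ)).symm)
  filter_upwards [hrat] with ω hω
  have hΦmono : Monotone fun x : ℝ => (ν {v | hk (Zp ω) v ≤ x}).toReal := by
    intro a b hab
    exact ENNReal.toReal_mono (measure_ne_top _ _)
      (measure_mono fun v hv => le_trans hv hab)
  have hΦr : ∀ x : ℝ, ∀ ε > (0:ℝ), ∃ y, x < y ∧
      (ν {v | hk (Zp ω) v ≤ y}).toReal < (ν {v | hk (Zp ω) v ≤ x}).toReal + ε := by
    intro x ε hε
    set sq : ℕ → Set ℝ := fun n => {v | hk (Zp ω) v ≤ x + 1/(n+1)} with hsq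
    have hanti : Antitone sq := by
      intro m n hmn v hv
      simp only [hsq, mem_setOf_eq] at hv ⊢
      have h1 : (1:ℝ)/((n:ℝ)+1) ≤ 1/((m:ℝ)+1) := by
        apply one_div_le_one_div_of_le (by positivity)
        exact_mod_cast Nat.succ_le_succ hmn
      linarith
    have hmeasn : ∀ n, NullMeasurableSet (sq n) ν := fun n =>
      (hkzmeas (Zp ω) measurableSet_Iic).nullMeasurableSet
    have hiInter : ⋂ n, sq n = {v | hk (Zp ω) v ≤ x} := by
      ext v
      simp only [mem_iInter, hsq, mem_setOf_eq]
      constructor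
      · intro hall
        by_contra hlt
        push_neg at hlt
        obtain ⟨n, hn⟩ := exists_nat_one_div_lt (sub_pos.mpr hlt)
        have := hall n
        have h1 : (1:ℝ)/((n:ℝ)+1) < hk (Zp ω) v - x := hn
        linarith
      · intro hle n
        have : (0:ℝ) < 1/(n+1) := by positivity
        linarith
    have htend := MeasureTheory.tendsto_measure_iInter_atTop hmeasn hanti ⟨0, measure_ne_top _ _⟩
    rw [hiInter] at htend
    have htendR : Tendsto (fun n => (ν (sq n)).toReal) atTop
        (𝓝 ((ν {v | hk (Zp ω) v ≤ x}).toReal)) :=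
      (ENNReal.tendsto_toReal (measure_ne_top _ _)).comp htend
    have hev : ∀ᶠ n in atTop, (ν (sq n)).toReal < (ν {v | hk (Zp ω) v ≤ x}).toReal + ε :=
      htendR.eventually_lt_const (by linarith)
    obtain ⟨n, hn⟩ := hev.exists
    refine ⟨x + 1/(n+1), ?_, hn⟩
    have h0 : (0:ℝ) < 1/((n:ℝ)+1) := by positivity
    linarith
  have hFr : ∀ x : ℝ, ∀ ε > (0:ℝ), ∃ y, x < y ∧ F (Zp ω) y < F (Zp ω) x + ε := by
    intro x ε hε
    have h := hFrc (Zp ω) x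
    have hmem : (F (Zp ω)) ⁻¹' (Iio (F (Zp ω) x + ε)) ∈ 𝓝[Ici x] x :=
      h (Iio_mem_nhds (by linarith))
    rw [Metric.mem_nhdsWithin_iff] at hmem
    obtain ⟨δ, hδ, hsub⟩ := hmem
    refine ⟨x + δ/2, by linarith, ?_⟩
    refine hsub ⟨?_, ?_⟩
    · rw [Metric.mem_ball, Real.dist_eq]
      have h0 : x + δ/2 - x = δ/2 := by ring
      rw [h0, abs_of_nonneg (by linarith)]
      linarith
    · exact mem_Ici.mpr (by linarith)
  have hall : ∀ x, F (Zp ω) x = (ν {v | hk (Zp ω) v ≤ x}).toReal :=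
    eq_of_monotone_of_rat_eq (hFmono _) hΦmono hFr hΦr hω
  have hsets : {v | hk (Zp ω) v ≤ hk (Zp ω) (Vk ω)} = Iic (Vk ω) := by
    ext v
    simp only [mem_setOf_eq, mem_Iic]
    exact (hkmono (Zp ω)).le_iff_le
  rw [hall _, hsets]

lemma condExp_indicator_eq_condDistrib {Ω' β ζ 𝒱 : Type*} [MeasurableSpace Ω']
    [MeasurableSpace β] [StandardBorelSpace β] [Nonempty β]
    [MeasurableSpace ζ] [MeasurableSpace 𝒱]
    (μ : Measure Ω') [IsProbabilityMeasure μ]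
    {B : Ω' → β} (hB : Measurable B) {V : Ω' → 𝒱} (hV : Measurable V)
    {Zp : Ω' → ζ} (hZp : Measurable Zp)
    (hind : IndepFun (fun ω => (B ω, V ω)) Zp μ)
    {t : Set β} (ht : MeasurableSet t) :
    (fun ω => (condDistrib B V μ (V ω) t).toReal) =ᵐ[μ]
      μ[Set.indicator (B ⁻¹' t) (fun _ => (1:ℝ))
        | MeasurableSpace.comap (fun ω => (Zp ω, V ω)) inferInstance] := by
  set κ := condDistrib B V μ with hκ
  set ZV : Ω' → ζ × 𝒱 := fun ω => (Zp ω, V ω) with hZV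
  have hZVm : Measurable ZV := hZp.prodMk hV
  have hκVm : Measurable fun ω => κ (V ω) t := (Kernel.measurable_coe κ ht).comp hV
  haveI : SigmaFinite (μ.trim hZVm.comap_le) := by
    refine @IsFiniteMeasure.toSigmaFinite _ _ _ ?_
    exact isFiniteMeasure_trim hZVm.comap_le
  -- the two measures
  set μ₁ : Measure (ζ × 𝒱) := (μ.withDensity (fun ω => κ (V ω) t)).map ZV with hμ₁
  set μ₂ : Measure (ζ × 𝒱) := (μ.restrict (B ⁻¹' t)).map ZV with hμ₂
  haveI h₁fin : IsFiniteMeasure μ₁ := by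
    constructor
    rw [hμ₁, Measure.map_apply hZVm MeasurableSet.univ, preimage_univ,
      withDensity_apply _ MeasurableSet.univ, Measure.restrict_univ]
    calc ∫⁻ ω, κ (V ω) t ∂μ ≤ ∫⁻ _, 1 ∂μ := lintegral_mono fun ω => prob_le_one
      _ = 1 := by simp
      _ < ⊤ := ENNReal.one_lt_top
  haveI h₂fin : IsFiniteMeasure μ₂ := by
    constructor
    rw [hμ₂, Measure.map_apply hZVm MeasurableSet.univ, preimage_univ]
    exact lt_of_le_of_lt (μ.restrict_le_self _) (measure_lt_top μ _)
  have hrect : ∀ C : Set ζ, MeasurableSet C → ∀ D : Set 𝒱, MeasurableSet D →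
      μ₁ (C ×ˢ D) = μ₂ (C ×ˢ D) := by
    intro C hC D hD
    have hpre : ZV ⁻¹' (C ×ˢ D) = Zp ⁻¹' C ∩ V ⁻¹' D := by
      ext ω; simp [hZV]
    -- μ₁ side
    have hμ₁eq : μ₁ (C ×ˢ D) = μ (V ⁻¹' D ∩ B ⁻¹' t) * μ (Zp ⁻¹' C) := by
      rw [hμ₁, Measure.map_apply hZVm (hC.prod hD),
        withDensity_apply _ (hZVm (hC.prod hD)), hpre]
      set f₁ : Ω' → ℝ≥0∞ := fun ω => κ (V ω) t * (D.indicator 1 (V ω)) with hf₁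
      set f₂ : Ω' → ℝ≥0∞ := fun ω => C.indicator 1 (Zp ω) with hf₂
      have hptwise : (Zp ⁻¹' C ∩ V ⁻¹' D).indicator (fun ω => κ (V ω) t) = f₁ * f₂ := by
        funext ω
        have h1' : (ω ∈ Zp ⁻¹' C) = (Zp ω ∈ C) := rfl
        have h2' : (ω ∈ V ⁻¹' D) = (V ω ∈ D) := rfl
        by_cases h1 : Zp ω ∈ C <;> by_cases h2 : V ω ∈ D <;>
          simp [hf₁, hf₂, indicator, h1, h2, h1', h2']
      have hf₁m : Measurable f₁ :=
        ((Kernel.measurable_coe κ ht).comp hV).mul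
          ((measurable_one.indicator hD).comp hV)
      have hf₂m : Measurable f₂ := (measurable_one.indicator hC).comp hZp
      have hindf : IndepFun f₁ f₂ μ := by
        have := hind.comp (φ := fun p : β × 𝒱 => κ p.2 t * (D.indicator 1 p.2))
          (ψ := fun z : ζ => C.indicator (1 : ζ → ℝ≥0∞) z)
          ((Kernel.measurable_coe κ ht).comp measurable_snd |>.mul
            ((measurable_one.indicator hD).comp measurable_snd))
          (measurable_one.indicator hC)
        exact this
      have hint1 : ∫⁻ ω, f₁ ω ∂μ = μ (V ⁻¹' D ∩ B ⁻¹' t) := by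
        have h1 : f₁ = (V ⁻¹' D).indicator (fun ω => κ (V ω) t) := by
          funext ω
          by_cases h2 : V ω ∈ D <;>
            simp [hf₁, indicator, h2, show (ω ∈ V ⁻¹' D) = (V ω ∈ D) from rfl]
        rw [h1, lintegral_indicator (hV hD)]
        exact setLIntegral_preimage_condDistrib hV hB.aemeasurable ht hD
      have hint2 : ∫⁻ ω, f₂ ω ∂μ = μ (Zp ⁻¹' C) := by
        rw [hf₂]
        have : (fun ω => C.indicator (1 : ζ → ℝ≥0∞) (Zp ω)) = (Zp ⁻¹' C).indicator 1 := by
          funext ω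
          by_cases h1 : Zp ω ∈ C <;>
            simp [indicator, h1, show (ω ∈ Zp ⁻¹' C) = (Zp ω ∈ C) from rfl]
        rw [this, lintegral_indicator_one (hZp hC)]
      rw [← lintegral_indicator ((hZp hC).inter (hV hD)), hptwise,
        lintegral_mul_eq_lintegral_mul_lintegral_of_indepFun hf₁m hf₂m hindf,
        hint1, hint2]
    -- μ₂ side
    have hμ₂eq : μ₂ (C ×ˢ D) = μ (B ⁻¹' t ∩ V ⁻¹' D) * μ (Zp ⁻¹' C) := by
      rw [hμ₂, Measure.map_apply hZVm (hC.prod hD), Measure.restrict_apply (hZVm (hC.prod hD)),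
        hpre]
      have hset : Zp ⁻¹' C ∩ V ⁻¹' D ∩ B ⁻¹' t
          = (fun ω => (B ω, V ω)) ⁻¹' (t ×ˢ D) ∩ Zp ⁻¹' C := by
        ext ω; simp only [mem_inter_iff, mem_preimage, mem_prod]; tauto
      rw [hset, hind.measure_inter_preimage_eq_mul (t ×ˢ D) C (ht.prod hD) hC,
        Set.mk_preimage_prod]
    rw [hμ₁eq, hμ₂eq, inter_comm]
  have hμeq : μ₁ = μ₂ := by
    refine ext_of_generate_finite _ generateFrom_prod.symm isPiSystem_prod ?_ ?_
    · rintro _ ⟨C, hC, D, hD, rfl⟩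
      exact hrect C hC D hD
    · rw [← univ_prod_univ]
      exact hrect _ MeasurableSet.univ _ MeasurableSet.univ
  -- conclude via ae_eq_condExp_of_forall_setIntegral_eq
  refine ae_eq_condExp_of_forall_setIntegral_eq hZVm.comap_le
    ((integrable_const (1:ℝ)).indicator (hB ht)) (fun A _ _ => ?_) (fun A hA _ => ?_) ?_
  · refine (integrable_of_bound μ hκVm.ennreal_toReal.aestronglyMeasurable 1 fun ω => ?_).integrableOn
    rw [abs_of_nonneg ENNReal.toReal_nonneg]
    exact toReal_prob_le_one _
  · obtain ⟨S, hS, rfl⟩ := hA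
    have hL : ∫ ω in ZV ⁻¹' S, (κ (V ω) t).toReal ∂μ = (μ₁ S).toReal := by
      rw [integral_toReal (hκVm.aemeasurable.restrict)
        (ae_of_all _ fun ω => lt_of_le_of_lt prob_le_one ENNReal.one_lt_top)]
      congr 1
      rw [hμ₁, Measure.map_apply hZVm hS, withDensity_apply _ (hZVm hS)]
    have hR : ∫ ω in ZV ⁻¹' S, Set.indicator (B ⁻¹' t) (fun _ => (1:ℝ)) ω ∂μ
        = (μ₂ S).toReal := by
      rw [integral_indicator_const _ (hB ht), measureReal_def, Measure.restrict_apply (hB ht),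
        smul_eq_mul, mul_one, hμ₂, Measure.map_apply hZVm hS,
        Measure.restrict_apply (hZVm hS), inter_comm]
    rw [hL, hR, hμeq]
  · exact (((Kernel.measurable_coe κ ht).ennreal_toReal.comp measurable_snd).comp
      (comap_measurable ZV)).stronglyMeasurable.aestronglyMeasurable

end RankProofAux

open RankProofAux Set

/-- Proposition 1, second part. With basic endogenous variables
`X_k = h_k(Z, V_k)` (`h_k` strictly increasing in its second argument, `V_k` atomless),
derived endogenous variables `X_k = g_k(X₁,…,X_{d_b}, Z₁)`, instrument exogeneity
`(B, V) ⊥ Z` where `Z = (Z₁, Z₂)`, and conditional ranks `R_k = F_{X_k|Z}(X_k | Z)`,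
the regressor vector `W = (1, X', Z₁')'` and the random coefficients `B` are conditionally
independent given `σ(R)`. -/
theorem regressors_and_coefficients_condIndep_given_rank
    {Ω : Type*} [mΩ : MeasurableSpace Ω] [StandardBorelSpace Ω] [Nonempty Ω]
    (μ : Measure Ω) [IsProbabilityMeasure μ]
    {d1 d2 db dx dw : ℕ} (hdb : db ≤ dx)
    (Z₁ : Ω → Fin d1 → ℝ) (Z₂ : Ω → Fin d2 → ℝ)
    (hZ₁ : Measurable Z₁) (hZ₂ : Measurable Z₂)
    (V : Ω → Fin db → ℝ) (hV : Measurable V)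
    (hVatomless : ∀ (k : Fin db) (v : ℝ), μ {ω | V ω k = v} = 0)
    (h : Fin db → ((Fin d1 → ℝ) × (Fin d2 → ℝ)) → ℝ → ℝ)
    (hhmeas : ∀ k, Measurable fun p : ((Fin d1 → ℝ) × (Fin d2 → ℝ)) × ℝ => h k p.1 p.2)
    (hhmono : ∀ k z, StrictMono (h k z))
    (g : Fin dx → (Fin db → ℝ) → (Fin d1 → ℝ) → ℝ)
    (hgmeas : ∀ k, Measurable fun p : (Fin db → ℝ) × (Fin d1 → ℝ) => g k p.1 p.2)
    (X : Fin dx → Ω → ℝ)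
    (hXbasic : ∀ k : Fin db, X (Fin.castLE hdb k) = fun ω => h k (Z₁ ω, Z₂ ω) (V ω k))
    (hXderived : ∀ k : Fin dx, db ≤ (k : ℕ) →
      X k = fun ω => g k (fun j : Fin db => X (Fin.castLE hdb j) ω) (Z₁ ω))
    (B : Ω → Fin dw → ℝ) (hB : Measurable B)
    (hindep : IndepFun (fun ω => (B ω, V ω)) (fun ω => (Z₁ ω, Z₂ ω)) μ)
    (F : Fin db → ((Fin d1 → ℝ) × (Fin d2 → ℝ)) → ℝ → ℝ)
    (hF : ∀ k, IsRegCondCDF μ (X (Fin.castLE hdb k)) (fun ω => (Z₁ ω, Z₂ ω)) (F k))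
    (R : Ω → Fin db → ℝ)
    (hRdef : R = fun ω k => F k (Z₁ ω, Z₂ ω) (X (Fin.castLE hdb k) ω))
    (hRmeas : Measurable R)
    (W : Ω → ℝ × (Fin dx → ℝ) × (Fin d1 → ℝ))
    (hWdef : W = fun ω => (1, fun k => X k ω, Z₁ ω)) :
    CondIndepFun (MeasurableSpace.comap R inferInstance) hRmeas.comap_le W B μ := by
  have hZp : Measurable fun ω => (Z₁ ω, Z₂ ω) := hZ₁.prodMk hZ₂
  have hVk : ∀ k : Fin db, Measurable fun ω => V ω k := fun k => (measurable_pi_apply k).comp hV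
  have hXb : ∀ j : Fin db, Measurable (X (Fin.castLE hdb j)) := by
    intro j; rw [hXbasic j]; exact (hhmeas j).comp (hZp.prodMk (hVk j))
  have hXm : ∀ k, Measurable (X k) := by
    intro k
    by_cases hk : (k : ℕ) < db
    · have hcast : Fin.castLE hdb ⟨(k : ℕ), hk⟩ = k := by apply Fin.ext; rfl
      have hh := hXb ⟨(k : ℕ), hk⟩
      rwa [hcast] at hh
    · rw [hXderived k (le_of_not_gt hk)]
      exact (hgmeas k).comp ((measurable_pi_lambda _ fun j => hXb j).prodMk hZ₁)
  have hW : Measurable W := by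
    rw [hWdef]
    exact measurable_const.prodMk ((measurable_pi_lambda _ fun k => hXm k).prodMk hZ₁)
  haveI hνprob : ∀ k : Fin db, IsProbabilityMeasure (μ.map fun ω => V ω k) :=
    fun k => Measure.isProbabilityMeasure_map (hVk k).aemeasurable
  have hGmono : ∀ k : Fin db, Monotone fun v => ((μ.map fun ω => V ω k) (Iic v)).toReal := by
    intro k a b hab
    exact ENNReal.toReal_mono (measure_ne_top _ _) (measure_mono (Iic_subset_Iic.mpr hab))
  have hGmeas : ∀ k : Fin db, Measurable fun v => ((μ.map fun ω => V ω k) (Iic v)).toReal :=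
    fun k => (hGmono k).measurable
  -- P1 : a.e., R equals a function of V
  have hP1 : ∀ᵐ ω ∂μ, R ω = fun k => ((μ.map fun ω' => V ω' k) (Iic (V ω k))).toReal := by
    have h1 : ∀ k : Fin db, ∀ᵐ ω ∂μ,
        R ω k = ((μ.map fun ω' => V ω' k) (Iic (V ω k))).toReal := by
      intro k
      have hindk : IndepFun (fun ω => (Z₁ ω, Z₂ ω)) (fun ω => V ω k) μ :=
        (hindep.comp ((measurable_pi_apply k).comp measurable_snd) measurable_id).symm
      have hFk := hF k
      rw [hXbasic k] at hFk
      have hr := RankProofAux.rank_eq_cdf μ hZp (hVk k) hindk (hhmeas k) (hhmono k) hFk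
      filter_upwards [hr] with ω hω
      rw [hRdef]
      simp only
      rw [hXbasic k]
      exact hω
    have h2 := (MeasureTheory.ae_all_iff).mpr h1
    filter_upwards [h2] with ω hω
    funext k
    exact hω k
  -- P2 : qT recovers V from the rank, a.e.
  have hP2 : ∀ᵐ ω ∂μ, ∀ k : Fin db,
      qT (μ.map fun ω' => V ω' k)
        (((μ.map fun ω' => V ω' k) (Iic (V ω k))).toReal) = V ω k := by
    rw [MeasureTheory.ae_all_iff]
    intro k
    have hatom : ∀ x : ℝ, (μ.map fun ω' => V ω' k) {x} = 0 := by
      intro x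
      rw [Measure.map_apply (hVk k) (measurableSet_singleton x)]
      have hset : (fun ω' => V ω' k) ⁻¹' {x} = {ω | V ω k = x} := by
        ext ω; simp
      rw [hset]; exact hVatomless k x
    have hae := RankProofAux.qT_ae _ hatom
    have hPmeas : MeasurableSet {v : ℝ |
        qT (μ.map fun ω' => V ω' k) (((μ.map fun ω' => V ω' k) (Iic v)).toReal) = v} := by
      apply measurableSet_eq_fun
      · exact (qT_measurable _).comp (hGmeas k)
      · exact measurable_id
    exact (MeasureTheory.ae_map_iff (hVk k).aemeasurable hPmeas).mp hae
  -- main reduction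
  rw [condIndepFun_iff_condExp_inter_preimage_eq_mul hW hB]
  intro s t hs ht
  haveI hSF : SigmaFinite (μ.trim hRmeas.comap_le) := by
    refine @IsFiniteMeasure.toSigmaFinite _ _ _ ?_
    exact isFiniteMeasure_trim hRmeas.comap_le
  -- objects depending on t
  set ψ : (Fin db → ℝ) → ℝ := fun v => (condDistrib B V μ v t).toReal with hψdef
  have hψmeas : Measurable ψ := (Kernel.measurable_coe _ ht).ennreal_toReal
  have hψ0 : ∀ v, 0 ≤ ψ v := fun v => ENNReal.toReal_nonneg
  have hψ1 : ∀ v, ψ v ≤ 1 := fun v => toReal_prob_le_one _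
  set φc : (Fin db → ℝ) → ℝ := fun r => ψ (fun k => qT (μ.map fun ω' => V ω' k) (r k)) with hφcdef
  have hφcmeas : Measurable φc :=
    hψmeas.comp (measurable_pi_lambda _ fun k => (qT_measurable _).comp (measurable_pi_apply k))
  set c : Ω → ℝ := fun ω => φc (R ω) with hcdef
  have hcm' : Measurable[MeasurableSpace.comap R inferInstance] c := hφcmeas.comp (Measurable.of_comap_le le_rfl)
  have hcm : Measurable c := hφcmeas.comp hRmeas
  have hc0 : ∀ ω, 0 ≤ c ω := fun ω => hψ0 _
  have hc1 : ∀ ω, c ω ≤ 1 := fun ω => hψ1 _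
  have hcbd : ∀ ω, |c ω| ≤ 1 := fun ω => by rw [abs_of_nonneg (hc0 ω)]; exact hc1 ω
  have hint_c : Integrable c μ := integrable_of_bound μ hcm.aestronglyMeasurable 1 hcbd
  have hcV : c =ᵐ[μ] fun ω => ψ (V ω) := by
    filter_upwards [hP1, hP2] with ω h1 h2
    rw [hcdef]
    simp only [hφcdef]
    rw [h1]
    congr 1
    funext k
    exact h2 k
  -- P3
  have hP3 := condExp_indicator_eq_condDistrib μ hB hV hZp hindep ht
  set ZV : Ω → ((Fin d1 → ℝ) × (Fin d2 → ℝ)) × (Fin db → ℝ) :=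
    fun ω => ((Z₁ ω, Z₂ ω), V ω) with hZVdef
  have hZVm : Measurable ZV := hZp.prodMk hV
  haveI hSF2 : SigmaFinite (μ.trim hZVm.comap_le) := by
    refine @IsFiniteMeasure.toSigmaFinite _ _ _ ?_
    exact isFiniteMeasure_trim hZVm.comap_le
  -- factor W through ZV
  set ξ : ((Fin d1 → ℝ) × (Fin d2 → ℝ)) × (Fin db → ℝ) → ℝ × (Fin dx → ℝ) × (Fin d1 → ℝ) :=
    fun p => (1, fun k => if hk : (k : ℕ) < db then h ⟨(k : ℕ), hk⟩ p.1 (p.2 ⟨(k : ℕ), hk⟩)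
      else g k (fun j => h j p.1 (p.2 j)) p.1.1, p.1.1) with hξdef
  have hξmeas : Measurable ξ := by
    refine measurable_const.prodMk (Measurable.prodMk ?_ measurable_fst.fst)
    refine measurable_pi_lambda _ fun k => ?_
    by_cases hk : (k : ℕ) < db
    · simp only [hξdef, dif_pos hk]
      exact (hhmeas _).comp (measurable_fst.prodMk ((measurable_pi_apply _).comp measurable_snd))
    · simp only [hξdef, dif_neg hk]
      exact (hgmeas k).comp ((measurable_pi_lambda _ fun j =>
        (hhmeas j).comp (measurable_fst.prodMk ((measurable_pi_apply j).comp measurable_snd))).prodMk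
        measurable_fst.fst)
  have hWfact : ∀ ω, W ω = ξ (ZV ω) := by
    intro ω
    rw [hWdef]
    simp only [hξdef, hZVdef]
    refine Prod.ext rfl (Prod.ext ?_ rfl)
    funext k
    by_cases hk : (k : ℕ) < db
    · simp only [dif_pos hk]
      have hcast : Fin.castLE hdb ⟨(k : ℕ), hk⟩ = k := by apply Fin.ext; rfl
      conv_lhs => rw [← hcast, hXbasic ⟨(k : ℕ), hk⟩]
    · simp only [dif_neg hk]
      rw [hXderived k (le_of_not_gt hk)]
      simp only
      congr 1
      funext j
      rw [hXbasic j]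
  have hGvec : Measurable fun v : Fin db → ℝ =>
      (fun k => ((μ.map fun ω' => V ω' k) (Iic (v k))).toReal : Fin db → ℝ) :=
    measurable_pi_lambda _ fun k => (hGmeas k).comp (measurable_pi_apply k)
  set R₀ : Ω → Fin db → ℝ := fun ω k => ((μ.map fun ω' => V ω' k) (Iic (V ω k))).toReal with hR₀def
  -- the key integral identity
  have star : ∀ E : Set (Fin db → ℝ), MeasurableSet E →
      ∀ s' : Set (ℝ × (Fin dx → ℝ) × (Fin d1 → ℝ)), MeasurableSet s' →
      ∫ ω in R ⁻¹' E ∩ W ⁻¹' s', c ω ∂μ = (μ (B ⁻¹' t ∩ (R ⁻¹' E ∩ W ⁻¹' s'))).toReal := by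
    intro E hE s' hs'
    set S' : Set (((Fin d1 → ℝ) × (Fin d2 → ℝ)) × (Fin db → ℝ)) :=
      {p | (fun k => ((μ.map fun ω' => V ω' k) (Iic (p.2 k))).toReal) ∈ E ∧ ξ p ∈ s'} with hS'def
    have hS'm : MeasurableSet S' := ((hGvec.comp measurable_snd) hE).inter (hξmeas hs')
    have hA' : ZV ⁻¹' S' = R₀ ⁻¹' E ∩ W ⁻¹' s' := by
      ext ω
      simp only [hS'def, mem_preimage, mem_inter_iff, mem_setOf_eq, hZVdef, hR₀def]
      rw [hWfact ω]
    have hAm : MeasurableSet (R ⁻¹' E ∩ W ⁻¹' s') := (hRmeas hE).inter (hW hs')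
    have hA'm : MeasurableSet (R₀ ⁻¹' E ∩ W ⁻¹' s') := hA' ▸ hZVm hS'm
    have hmemiff : ∀ᵐ ω ∂μ, (ω ∈ R ⁻¹' E ∩ W ⁻¹' s') ↔ (ω ∈ R₀ ⁻¹' E ∩ W ⁻¹' s') := by
      filter_upwards [hP1] with ω h1
      simp only [mem_inter_iff, mem_preimage]
      rw [show R ω = R₀ ω from h1]
    have haeeq : (R ⁻¹' E ∩ W ⁻¹' s').indicator c
        =ᵐ[μ] (R₀ ⁻¹' E ∩ W ⁻¹' s').indicator (fun ω => ψ (V ω)) := by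
      filter_upwards [hmemiff, hcV] with ω h1 h2
      by_cases hω : ω ∈ R₀ ⁻¹' E ∩ W ⁻¹' s'
      · rw [indicator_of_mem hω, indicator_of_mem (h1.mpr hω)]
        exact h2
      · rw [indicator_of_notMem hω, indicator_of_notMem (fun hc' => hω (h1.mp hc'))]
    have hsetae : (B ⁻¹' t ∩ (R₀ ⁻¹' E ∩ W ⁻¹' s') : Set Ω)
        =ᵐ[μ] (B ⁻¹' t ∩ (R ⁻¹' E ∩ W ⁻¹' s') : Set Ω) := by
      rw [Filter.eventuallyEq_set]
      filter_upwards [hmemiff] with ω h1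
      simp only [mem_inter_iff] at h1 ⊢
      tauto
    calc ∫ ω in R ⁻¹' E ∩ W ⁻¹' s', c ω ∂μ
        = ∫ ω, (R ⁻¹' E ∩ W ⁻¹' s').indicator c ω ∂μ := (integral_indicator hAm).symm
      _ = ∫ ω, (R₀ ⁻¹' E ∩ W ⁻¹' s').indicator (fun ω => ψ (V ω)) ω ∂μ :=
          integral_congr_ae haeeq
      _ = ∫ ω in R₀ ⁻¹' E ∩ W ⁻¹' s', ψ (V ω) ∂μ := integral_indicator hA'm
      _ = ∫ ω in R₀ ⁻¹' E ∩ W ⁻¹' s',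
            (μ[Set.indicator (B ⁻¹' t) (fun _ => (1:ℝ))
              | MeasurableSpace.comap ZV inferInstance]) ω ∂μ := by
          refine setIntegral_congr_ae hA'm ?_
          filter_upwards [hP3] with ω hω _
          exact hω
      _ = ∫ ω in R₀ ⁻¹' E ∩ W ⁻¹' s', Set.indicator (B ⁻¹' t) (fun _ => (1:ℝ)) ω ∂μ := by
          rw [← hA']
          exact setIntegral_condExp hZVm.comap_le
            ((integrable_const (1:ℝ)).indicator (hB ht)) ⟨S', hS'm, rfl⟩
      _ = (μ (B ⁻¹' t ∩ (R₀ ⁻¹' E ∩ W ⁻¹' s'))).toReal := by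
          rw [integral_indicator_const _ (hB ht), measureReal_def, Measure.restrict_apply (hB ht),
            smul_eq_mul, mul_one]
      _ = (μ (B ⁻¹' t ∩ (R ⁻¹' E ∩ W ⁻¹' s'))).toReal := by
          rw [measure_congr hsetae]
  -- LA : conditional expectation of the B-indicator given the rank σ-algebra
  have hInd_t : Integrable (Set.indicator (B ⁻¹' t) fun _ => (1:ℝ)) μ :=
    (integrable_const 1).indicator (hB ht)
  have LA : c =ᵐ[μ] μ[Set.indicator (B ⁻¹' t) (fun _ => (1:ℝ)) | MeasurableSpace.comap R inferInstance] := by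
    refine ae_eq_condExp_of_forall_setIntegral_eq hRmeas.comap_le hInd_t
      (fun A _ _ => hint_c.integrableOn) ?_ hcm'.stronglyMeasurable.aestronglyMeasurable
    rintro A ⟨E, hE, rfl⟩ _
    have hst := star E hE Set.univ MeasurableSet.univ
    rw [preimage_univ, inter_univ] at hst
    rw [hst, integral_indicator_const _ (hB ht), measureReal_def, Measure.restrict_apply (hB ht),
      smul_eq_mul, mul_one]
  -- LB
  have hInd_st : Integrable (Set.indicator (W ⁻¹' s ∩ B ⁻¹' t) fun _ => (1:ℝ)) μ :=
    (integrable_const 1).indicator ((hW hs).inter (hB ht))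
  have hInd_s : Integrable (Set.indicator (W ⁻¹' s) fun _ => (1:ℝ)) μ :=
    (integrable_const 1).indicator (hW hs)
  have LB : (fun ω => c ω * (μ[Set.indicator (W ⁻¹' s) (fun _ => (1:ℝ)) | MeasurableSpace.comap R inferInstance]) ω)
      =ᵐ[μ] μ[Set.indicator (W ⁻¹' s ∩ B ⁻¹' t) (fun _ => (1:ℝ)) | MeasurableSpace.comap R inferInstance] := by
    refine ae_eq_condExp_of_forall_setIntegral_eq hRmeas.comap_le hInd_st
      (fun A _ _ => ?_) ?_ ?_
    · refine (Integrable.bdd_mul (c := 1) integrable_condExp hcm.aestronglyMeasurable (ae_of_all _ fun ω => ?_)).integrableOn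
      rw [Real.norm_eq_abs]; exact hcbd ω
    · rintro A ⟨E, hE, rfl⟩ _
      set d : Ω → ℝ := fun ω => (R ⁻¹' E).indicator (fun _ => (1:ℝ)) ω * c ω with hddef
      have hERm : MeasurableSet[MeasurableSpace.comap R inferInstance] (R ⁻¹' E) := ⟨E, hE, rfl⟩
      have hdsm : StronglyMeasurable[MeasurableSpace.comap R inferInstance] d :=
        ((measurable_const.indicator hERm).mul hcm').stronglyMeasurable
      have hdb : ∀ᵐ ω ∂μ, ‖d ω‖ ≤ 1 := by
        refine Filter.Eventually.of_forall fun ω => ?_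
        rw [Real.norm_eq_abs, hddef]
        simp only
        by_cases hω : ω ∈ R ⁻¹' E
        · rw [indicator_of_mem hω, one_mul]; exact hcbd ω
        · rw [indicator_of_notMem hω, zero_mul, abs_zero]; norm_num
      have pull := condExp_stronglyMeasurable_mul_of_bound hRmeas.comap_le hdsm hInd_s 1 hdb
      have hpt1 : (R ⁻¹' E).indicator
          (fun ω => c ω * (μ[Set.indicator (W ⁻¹' s) (fun _ => (1:ℝ)) | MeasurableSpace.comap R inferInstance]) ω)
          = d * (μ[Set.indicator (W ⁻¹' s) (fun _ => (1:ℝ)) | MeasurableSpace.comap R inferInstance]) := by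
        funext ω
        by_cases hω : ω ∈ R ⁻¹' E
        · rw [indicator_of_mem hω]
          simp only [Pi.mul_apply, hddef, indicator_of_mem hω, one_mul]
        · rw [indicator_of_notMem hω]
          simp only [Pi.mul_apply, hddef, indicator_of_notMem hω, zero_mul]
      have hpt2 : d * Set.indicator (W ⁻¹' s) (fun _ => (1:ℝ))
          = (R ⁻¹' E ∩ W ⁻¹' s).indicator c := by
        funext ω
        simp only [Pi.mul_apply, hddef]
        by_cases h1 : ω ∈ R ⁻¹' E <;> by_cases h2 : ω ∈ W ⁻¹' s
        · rw [indicator_of_mem h1, indicator_of_mem h2, indicator_of_mem (mem_inter h1 h2)]; ring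
        · rw [indicator_of_mem h1, indicator_of_notMem h2,
            indicator_of_notMem (fun hc' => h2 hc'.2)]; ring
        · rw [indicator_of_notMem h1, indicator_of_mem h2,
            indicator_of_notMem (fun hc' => h1 hc'.1)]; ring
        · rw [indicator_of_notMem h1, indicator_of_notMem h2,
            indicator_of_notMem (fun hc' => h1 hc'.1)]; ring
      calc ∫ ω in R ⁻¹' E, c ω * (μ[Set.indicator (W ⁻¹' s) (fun _ => (1:ℝ)) | MeasurableSpace.comap R inferInstance]) ω ∂μ
          = ∫ ω, (R ⁻¹' E).indicator
              (fun ω => c ω * (μ[Set.indicator (W ⁻¹' s) (fun _ => (1:ℝ)) | MeasurableSpace.comap R inferInstance]) ω) ω ∂μ :=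
            (integral_indicator (hRmeas hE)).symm
        _ = ∫ ω, (d * (μ[Set.indicator (W ⁻¹' s) (fun _ => (1:ℝ)) | MeasurableSpace.comap R inferInstance])) ω ∂μ := by
            rw [hpt1]
        _ = ∫ ω, (μ[d * Set.indicator (W ⁻¹' s) (fun _ => (1:ℝ)) | MeasurableSpace.comap R inferInstance]) ω ∂μ :=
            (integral_congr_ae pull).symm
        _ = ∫ ω, (d * Set.indicator (W ⁻¹' s) (fun _ => (1:ℝ))) ω ∂μ :=
            integral_condExp hRmeas.comap_le
        _ = ∫ ω, (R ⁻¹' E ∩ W ⁻¹' s).indicator c ω ∂μ := by rw [hpt2]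
        _ = ∫ ω in R ⁻¹' E ∩ W ⁻¹' s, c ω ∂μ := integral_indicator ((hRmeas hE).inter (hW hs))
        _ = (μ (B ⁻¹' t ∩ (R ⁻¹' E ∩ W ⁻¹' s))).toReal := star E hE s hs
        _ = ∫ ω in R ⁻¹' E, Set.indicator (W ⁻¹' s ∩ B ⁻¹' t) (fun _ => (1:ℝ)) ω ∂μ := by
            rw [integral_indicator_const _ ((hW hs).inter (hB ht)), measureReal_def,
              Measure.restrict_apply ((hW hs).inter (hB ht)), smul_eq_mul, mul_one]
            congr 2
            ext ω
            simp only [mem_inter_iff, mem_preimage]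
            tauto
    · exact ((hcm'.stronglyMeasurable).mul stronglyMeasurable_condExp).aestronglyMeasurable
  -- conclude
  refine LB.symm.trans ?_
  filter_upwards [LA] with ω hω
  rw [hω, mul_comm]
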